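/- A finite reflexive graph is cop-win if and only if it is constructible. -/

import Mathlib

structure RefGraph (V : Type*) where
  Adj : V → V → Prop
  symm : ∀ u v, Adj u v → Adj v u
  refl : ∀ v, Adj v v

/-- The sequence of cop positions when the cop starts at `c0`, plays the
(positional) strategy `S`, and the robber's positions are given by `rb`
(`rb 0` is the robber's starting vertex, chosen after seeing `c0`;
the cop's `(n+1)`-st position responds to the robber's position `rb n`). -/
def copSeq {V : Type*} (S : V → V → V) (c0 : V) (rb : ℕ → V) : ℕ → V
  | 0 => c0
  | n + 1 => S (copSeq S c0 rb n) (rb n)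

/-- A legal robber play: consecutive positions are adjacent (staying put is
allowed since graphs are reflexive). -/
def LegalPlay {V : Type*} (G : RefGraph V) (rb : ℕ → V) : Prop :=
  ∀ n, G.Adj (rb n) (rb (n + 1))

/-- The cop playing `S` from `c0` catches the robber play `rb`: at some point
cop and robber occupy the same vertex. -/
def Catches {V : Type*} (S : V → V → V) (c0 : V) (rb : ℕ → V) : Prop :=
  ∃ n, copSeq S c0 rb n = rb n ∨ copSeq S c0 rb (n + 1) = rb n

/-- `(c0, S)` is a winning strategy for the cop on `G`: all moves are legal and
every legal robber play is caught after finitely many rounds. -/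
def WinningStrat {V : Type*} (G : RefGraph V) (c0 : V) (S : V → V → V) : Prop :=
  (∀ c r, G.Adj c (S c r)) ∧ ∀ rb : ℕ → V, LegalPlay G rb → Catches S c0 rb

/-- `G` is cop-win: the cop has a winning strategy. -/
def CopWin {V : Type*} (G : RefGraph V) : Prop :=
  ∃ (c0 : V) (S : V → V → V), WinningStrat G c0 S

/-- `r` (a strict order relation) is a dominating order for `G`: every vertex `ν`
which is not minimal is dominated in `G_{≤ν}` by some earlier vertex. -/
def IsDomOrder {V : Type*} (G : RefGraph V) (r : V → V → Prop) : Prop :=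
  ∀ ν, (∃ μ, r μ ν) →
    ∃ μ, r μ ν ∧ G.Adj μ ν ∧ ∀ η, (r η ν ∨ η = ν) → G.Adj ν η → G.Adj μ η

/-- `G` is constructible: some well order of the vertex set is a dominating order. -/
def Constructible {V : Type*} (G : RefGraph V) : Prop :=
  ∃ r : V → V → Prop, IsWellOrder V r ∧ IsDomOrder G r

section Psi
variable {V : Type*}

noncomputable def psi (F : V → V) (rk : V → ℕ)
    (hF : ∀ x, 0 < rk x → rk (F x) < rk x) (k : ℕ) (x : V) : V :=
  if h : rk x ≤ k then x else psi F rk hF k (F x)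
termination_by rk x
decreasing_by exact hF x (by omega)

variable {F : V → V} {rk : V → ℕ} {hF : ∀ x, 0 < rk x → rk (F x) < rk x}

lemma psi_of_le {k : ℕ} {x : V} (h : rk x ≤ k) : psi F rk hF k x = x := by
  rw [psi]; simp [h]

lemma psi_of_gt {k : ℕ} {x : V} (h : k < rk x) :
    psi F rk hF k x = psi F rk hF k (F x) := by
  rw [psi]; simp [Nat.not_le.mpr h]

lemma rk_psi_le (k : ℕ) (x : V) : rk (psi F rk hF k x) ≤ k := by
  generalize hm : rk x = m
  induction m using Nat.strong_induction_on generalizing x with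
  | _ m ih =>
    by_cases h : rk x ≤ k
    · rw [psi_of_le h]; exact h
    · rw [psi_of_gt (by omega)]
      exact ih (rk (F x)) (by rw [← hm]; exact hF x (by omega)) _ rfl

lemma psi_psi (k : ℕ) (x : V) :
    psi F rk hF k (psi F rk hF (k + 1) x) = psi F rk hF k x := by
  generalize hm : rk x = m
  induction m using Nat.strong_induction_on generalizing x with
  | _ m ih =>
    by_cases h : rk x ≤ k + 1
    · rw [psi_of_le h]
    · rw [psi_of_gt (x := x) (k := k + 1) (by omega), psi_of_gt (x := x) (k := k) (by omega)]
      exact ih (rk (F x)) (by rw [← hm]; exact hF x (by omega)) _ rfl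
end Psi

section PsiDom
variable {V : Type*} {G : RefGraph V} {F : V → V} {rk : V → ℕ}
  {hF : ∀ x, 0 < rk x → rk (F x) < rk x}
  (hdom : ∀ x, 0 < rk x → G.Adj (F x) x ∧
    ∀ η, rk η ≤ rk x → G.Adj x η → G.Adj (F x) η)

include hdom

lemma psi_hom (k : ℕ) (u u' : V) (h : G.Adj u u') :
    G.Adj (psi F rk hF k u) (psi F rk hF k u') := by
  generalize hm : rk u + rk u' = m
  induction m using Nat.strong_induction_on generalizing u u' with
  | _ m ih =>
    by_cases h1 : rk u ≤ k
    · by_cases h2 : rk u' ≤ k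
      · rwa [psi_of_le h1, psi_of_le h2]
      · -- rk u' > k ≥ rk u
        rw [psi_of_gt (x := u') (by omega)]
        have hd := hdom u' (by omega)
        have : G.Adj u (F u') := G.symm _ _ (hd.2 u (by omega) (G.symm _ _ h))
        exact ih (rk u + rk (F u')) (by have := hF u' (by omega); omega) _ _ this rfl
    · rcases Nat.le_total (rk u') (rk u) with hle | hle
      · rw [psi_of_gt (x := u) (by omega)]
        have hd := hdom u (by omega)
        have : G.Adj (F u) u' := hd.2 u' hle h
        exact ih (rk (F u) + rk u') (by have := hF u (by omega); omega) _ _ this rfl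
      · rw [psi_of_gt (x := u') (by omega)]
        have hd := hdom u' (by omega)
        have : G.Adj u (F u') := G.symm _ _ (hd.2 u hle (G.symm _ _ h))
        exact ih (rk u + rk (F u')) (by have := hF u' (by omega); omega) _ _ this rfl

lemma psi_step (k : ℕ) (u u' : V) (h : G.Adj u u') :
    G.Adj (psi F rk hF k u) (psi F rk hF (k + 1) u') := by
  set y := psi F rk hF (k + 1) u with hy
  set y' := psi F rk hF (k + 1) u' with hy'
  have hyy' : G.Adj y y' := psi_hom hdom (k + 1) u u' h
  have hky : rk y ≤ k + 1 := rk_psi_le _ _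
  have hky' : rk y' ≤ k + 1 := rk_psi_le _ _
  have hred : psi F rk hF k u = psi F rk hF k y := (psi_psi k u).symm
  rw [hred]
  by_cases hc : rk y ≤ k
  · rwa [psi_of_le hc]
  · rw [psi_of_gt (by omega)]
    have hFy : rk (F y) < rk y := hF y (by omega)
    rw [psi_of_le (by omega)]
    exact (hdom y (by omega)).2 y' (by omega) hyy'
end PsiDom

open Classical in
lemma exists_dismantle {V : Type*} [Fintype V] [DecidableEq V] (G : RefGraph V) :
    ∀ (n : ℕ) (A : Finset V), A.card ≤ n →
    ∃ (K : Finset V) (π : V → V) (ρ : V → ℕ),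
      K ⊆ A ∧
      (∀ u μ, u ∈ K → μ ∈ K → μ ≠ u → ∃ η, η ∈ K ∧ G.Adj u η ∧ ¬ G.Adj μ η) ∧
      (∀ x, x ∈ A → π x ∈ K) ∧ (∀ x, x ∈ K → π x = x) ∧
      (∀ x y, x ∈ A → y ∈ A → G.Adj x y → G.Adj (π x) (π y)) ∧
      (∀ x y, x ∈ A → y ∈ A → ρ x = ρ y → x = y ∨ (x ∈ K ∧ y ∈ K)) ∧
      (∀ ν, ν ∈ A → (∃ μ, μ ∈ A ∧ ρ μ < ρ ν) → ∃ μ, μ ∈ A ∧ ρ μ < ρ ν ∧ G.Adj μ ν ∧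
        ∀ η, η ∈ A → ρ η ≤ ρ ν → G.Adj ν η → G.Adj μ η) := by
  intro n
  induction n with
  | zero =>
    intro A hA
    have hAe : A = ∅ := Finset.card_eq_zero.mp (Nat.le_zero.mp hA)
    subst hAe
    exact ⟨∅, id, fun _ => 0, Finset.Subset.refl _,
      fun u μ hu => absurd hu (by simp),
      fun x hx => absurd hx (by simp),
      fun x hx => absurd hx (by simp),
      fun x y hx => absurd hx (by simp),
      fun x y hx => absurd hx (by simp),
      fun ν hν => absurd hν (by simp)⟩
  | succ n ih =>
    intro A hA
    by_cases hcor : ∃ u, u ∈ A ∧ ∃ μ, μ ∈ A ∧ μ ≠ u ∧ ∀ η, η ∈ A → G.Adj u η → G.Adj μ η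
    · obtain ⟨u, hu, μ0, hμ0, hne, hdomu⟩ := hcor
      set A' := A.erase u with hA'
      have hcard : A'.card ≤ n := by
        rw [hA', Finset.card_erase_of_mem hu]
        omega
      obtain ⟨K, π', ρ', hKA, hNC, hπK, hπfix, hπhom, hinj, hdom⟩ := ih A' hcard
      have hμ0A' : μ0 ∈ A' := Finset.mem_erase.mpr ⟨hne, hμ0⟩
      set σ : V → V := fun x => if x = u then μ0 else x with hσ
      have hσA : ∀ x, x ∈ A → σ x ∈ A' := by
        intro x hx
        by_cases hxu : x = u
        · simp [hσ, hxu, hμ0A']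
        · simp only [hσ, if_neg hxu]
          exact Finset.mem_erase.mpr ⟨hxu, hx⟩
      have hσhom : ∀ x y, x ∈ A → y ∈ A → G.Adj x y → G.Adj (σ x) (σ y) := by
        intro x y hx hy hadj
        by_cases hxu : x = u <;> by_cases hyu : y = u
        · simp only [hσ, if_pos hxu, if_pos hyu]; exact G.refl μ0
        · simp only [hσ, if_pos hxu, if_neg hyu]
          exact hdomu y hy (hxu ▸ hadj)
        · simp only [hσ, if_neg hxu, if_pos hyu]
          exact G.symm _ _ (hdomu x hx (G.symm _ _ (hyu ▸ hadj)))
        · simpa only [hσ, if_neg hxu, if_neg hyu] using hadj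
      set B := A'.sup ρ' with hB
      have hle : ∀ x, x ∈ A' → ρ' x ≤ B := fun x hx => Finset.le_sup hx
      set ρ : V → ℕ := fun x => if x = u then B + 1 else ρ' x with hρ
      have hρA' : ∀ x, x ∈ A' → ρ x = ρ' x := by
        intro x hx
        have : x ≠ u := (Finset.mem_erase.mp hx).1
        simp [hρ, this]
      refine ⟨K, fun x => π' (σ x), ρ, ?_, hNC, ?_, ?_, ?_, ?_, ?_⟩
      · exact hKA.trans (Finset.erase_subset _ _)
      · exact fun x hx => hπK _ (hσA x hx)
      · intro x hx
        have hxA' : x ∈ A' := hKA hx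
        have hxu : x ≠ u := (Finset.mem_erase.mp hxA').1
        simp only [hσ, if_neg hxu]
        exact hπfix x hx
      · exact fun x y hx hy hadj => hπhom _ _ (hσA x hx) (hσA y hy) (hσhom x y hx hy hadj)
      · intro x y hx hy hxy
        by_cases hxu : x = u <;> by_cases hyu : y = u
        · exact Or.inl (hxu.trans hyu.symm)
        · exfalso
          have hyA' : y ∈ A' := Finset.mem_erase.mpr ⟨hyu, hy⟩
          have := hle y hyA'
          simp only [hρ, if_pos hxu, if_neg hyu] at hxy
          omega
        · exfalso
          have hxA' : x ∈ A' := Finset.mem_erase.mpr ⟨hxu, hx⟩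
          have := hle x hxA'
          simp only [hρ, if_neg hxu, if_pos hyu] at hxy
          omega
        · have hxA' : x ∈ A' := Finset.mem_erase.mpr ⟨hxu, hx⟩
          have hyA' : y ∈ A' := Finset.mem_erase.mpr ⟨hyu, hy⟩
          simp only [hρ, if_neg hxu, if_neg hyu] at hxy
          rcases hinj x y hxA' hyA' hxy with h | h
          · exact Or.inl h
          · exact Or.inr h
      · intro ν hν hex
        by_cases hνu : ν = u
        · subst hνu
          refine ⟨μ0, hμ0, ?_, hdomu ν hν (G.refl ν), fun η hη _ hadj => hdomu η hη hadj⟩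
          have h1 : ρ μ0 = ρ' μ0 := hρA' μ0 hμ0A'
          have h2 := hle μ0 hμ0A'
          have h3 : ρ ν = B + 1 := by simp [hρ]
          omega
        · have hνA' : ν ∈ A' := Finset.mem_erase.mpr ⟨hνu, hν⟩
          have hρν : ρ ν = ρ' ν := hρA' ν hνA'
          obtain ⟨μ1, hμ1, hlt1⟩ := hex
          have hμ1u : μ1 ≠ u := by
            intro h
            have := hle ν hνA'
            rw [hρν] at hlt1
            simp only [hρ, if_pos h] at hlt1
            omega
          have hμ1A' : μ1 ∈ A' := Finset.mem_erase.mpr ⟨hμ1u, hμ1⟩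
          have hlt1' : ρ' μ1 < ρ' ν := by
            rw [← hρA' μ1 hμ1A', ← hρν]; exact hlt1
          obtain ⟨mu2, hmu2A', hmu2lt, hmu2adj, hmu2dom⟩ := hdom ν hνA' ⟨μ1, hμ1A', hlt1'⟩
          refine ⟨mu2, (Finset.erase_subset _ _) hmu2A', ?_, hmu2adj, ?_⟩
          · rw [hρA' mu2 hmu2A', hρν]; exact hmu2lt
          · intro η hη hρη hadj
            have hηu : η ≠ u := by
              intro h
              rw [hρν] at hρη
              have := hle ν hνA'
              simp only [hρ, if_pos h] at hρη
              omega
            have hηA' : η ∈ A' := Finset.mem_erase.mpr ⟨hηu, hη⟩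
            exact hmu2dom η hηA' (by rw [← hρA' η hηA', ← hρν]; exact hρη) hadj
    · push_neg at hcor
      refine ⟨A, id, fun _ => 0, Finset.Subset.refl _, ?_, fun x hx => hx,
        fun x _ => rfl, fun x y _ _ h => h, fun x y hx hy _ => Or.inr ⟨hx, hy⟩, ?_⟩
      · intro u μ hu hμ hne
        exact hcor u hu μ hμ hne
      · rintro ν hν ⟨μ, hμ, hlt⟩
        simp only at hlt
        omega

open Classical in
lemma robber_wins {V : Type*} (G : RefGraph V) (K : Finset V) (π : V → V)
    (hNC : ∀ u μ, u ∈ K → μ ∈ K → μ ≠ u → ∃ η, η ∈ K ∧ G.Adj u η ∧ ¬ G.Adj μ η)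
    (hπK : ∀ x, π x ∈ K) (hπfix : ∀ x, x ∈ K → π x = x)
    (hπhom : ∀ x y, G.Adj x y → G.Adj (π x) (π y))
    (hcard : 2 ≤ K.card) : ¬ CopWin G := by
  rintro ⟨c0, S, hSleg, hwin⟩
  -- initial robber vertex
  have hw0 : ∃ w, w ∈ K ∧ ¬ G.Adj (π c0) w := by
    by_contra h
    push_neg at h
    obtain ⟨u, hu, hne⟩ := Finset.exists_mem_ne (s := K) (by omega) (π c0)
    obtain ⟨η, hη, hadj, hnadj⟩ := hNC u (π c0) hu (hπK c0) (Ne.symm hne)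
    exact hnadj (h η hη)
  obtain ⟨w0, hw0K, hw0n⟩ := hw0
  set step : V × V → V × V := fun p =>
    (S p.1 p.2, if G.Adj (π (S p.1 p.2)) p.2 then
        (if h : ∃ η, η ∈ K ∧ G.Adj p.2 η ∧ ¬ G.Adj (π (S p.1 p.2)) η then h.choose else p.2)
      else p.2) with hstepdef
  set p : ℕ → V × V := fun m => step^[m] (c0, w0) with hp
  set rb : ℕ → V := fun m => (p m).2 with hrbdef
  have hpstep : ∀ m, p (m + 1) = step (p m) := by
    intro m
    simp only [hp, Function.iterate_succ_apply']
  have hcop : ∀ m, (p m).1 = copSeq S c0 rb m := by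
    intro m
    induction m with
    | zero => simp [hp, copSeq]
    | succ m ihm =>
      rw [hpstep m, copSeq]
      simp only [hstepdef]
      rw [ihm]
  have hinv : ∀ m, rb m ∈ K ∧ ¬ G.Adj (π (copSeq S c0 rb m)) (rb m) := by
    intro m
    induction m with
    | zero =>
      refine ⟨hw0K, ?_⟩
      show ¬ G.Adj (π c0) (rb 0)
      simpa [hrbdef, hp] using hw0n
    | succ m ihm =>
      obtain ⟨hK, hnadj⟩ := ihm
      have hc' : copSeq S c0 rb (m + 1) = S (p m).1 (p m).2 := by
        rw [copSeq, hcop m]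
      have hrb1 : rb (m + 1) = (step (p m)).2 := by
        rw [hrbdef]; simp only [hpstep m]
      by_cases hA : G.Adj (π (S (p m).1 (p m).2)) (p m).2
      · have hne : π (S (p m).1 (p m).2) ≠ (p m).2 := by
          intro heq
          apply hnadj
          have h1 : G.Adj ((p m).1) (S (p m).1 (p m).2) := hSleg _ _
          have h2 := hπhom _ _ h1
          rw [heq] at h2
          rw [← hcop m]
          exact h2
        have hex : ∃ η, η ∈ K ∧ G.Adj ((p m).2) η ∧ ¬ G.Adj (π (S (p m).1 (p m).2)) η :=
          hNC ((p m).2) (π (S (p m).1 (p m).2)) hK (hπK _) hne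
        have hrb2 : rb (m + 1) = hex.choose := by
          rw [hrb1, hstepdef]
          simp only [if_pos hA, dif_pos hex]
        obtain ⟨h1, h2, h3⟩ := hex.choose_spec
        rw [hrb2, hc']
        exact ⟨h1, h3⟩
      · have hrb2 : rb (m + 1) = (p m).2 := by
          rw [hrb1, hstepdef]
          simp only [if_neg hA]
        rw [hrb2, hc']
        exact ⟨hK, hA⟩
  have hlegal : LegalPlay G rb := by
    intro m
    have hrb1 : rb (m + 1) = (step (p m)).2 := by
      rw [hrbdef]; simp only [hpstep m]
    have hrbm : rb m = (p m).2 := rfl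
    rw [hrb1, hrbm, hstepdef]
    by_cases hA : G.Adj (π (S (p m).1 (p m).2)) (p m).2
    · simp only [if_pos hA]
      by_cases hex : ∃ η, η ∈ K ∧ G.Adj ((p m).2) η ∧ ¬ G.Adj (π (S (p m).1 (p m).2)) η
      · simp only [dif_pos hex]
        exact hex.choose_spec.2.1
      · simp only [dif_neg hex]
        exact G.refl _
    · simp only [if_neg hA]
      exact G.refl _
  obtain ⟨n, hcatch⟩ := hwin rb hlegal
  obtain ⟨hKn, hnadjn⟩ := hinv n
  rcases hcatch with h | h
  · apply hnadjn
    rw [h, hπfix _ hKn]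
    exact G.refl _
  · apply hnadjn
    have h1 : G.Adj (copSeq S c0 rb n) (copSeq S c0 rb (n + 1)) := by
      rw [copSeq]; exact hSleg _ _
    have h2 := hπhom _ _ h1
    rw [h, hπfix _ hKn] at h2
    exact h2

open Classical in
theorem constructible_copWin {V : Type*} [Fintype V] [Nonempty V] (G : RefGraph V)
    (hC : Constructible G) : CopWin G := by
  obtain ⟨r, hwo, hdo⟩ := hC
  haveI := hwo
  -- rank function
  set n := Fintype.card V with hn
  set rk : V → ℕ := fun x => (Finset.univ.filter (fun y => r y x)).card with hrk
  have hmono : ∀ a b, r a b → rk a < rk b := by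
    intro a b hab
    apply Finset.card_lt_card
    constructor
    · intro y hy
      simp only [Finset.mem_filter, Finset.mem_univ, true_and] at *
      exact IsTrans.trans (r := r) _ _ _ hy hab
    · intro hsub
      have ha : a ∈ Finset.univ.filter (fun y => r y b) := by
        simp [Finset.mem_filter, hab]
      have := hsub ha
      simp only [Finset.mem_filter, Finset.mem_univ, true_and] at this
      exact irrefl a this
  have htri : ∀ a b : V, r a b ∨ a = b ∨ r b a := fun a b => trichotomous a b
  have hof : ∀ x, 0 < rk x → ∃ μ, r μ x := by
    intro x hx
    rw [hrk] at hx
    obtain ⟨y, hy⟩ := Finset.card_pos.mp hx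
    simp only [Finset.mem_filter, Finset.mem_univ, true_and] at hy
    exact ⟨y, hy⟩
  have hle : ∀ x η, rk η ≤ rk x → r η x ∨ η = x := by
    intro x η h
    rcases htri η x with h1 | h1 | h1
    · exact Or.inl h1
    · exact Or.inr h1
    · exact absurd (hmono _ _ h1) (by omega)
  have hinj : ∀ a b : V, rk a = rk b → a = b := by
    intro a b h
    rcases htri a b with h1 | h1 | h1
    · exact absurd (hmono _ _ h1) (by omega)
    · exact h1
    · exact absurd (hmono _ _ h1) (by omega)
  have hrklt : ∀ x, rk x < n := by
    intro x
    rw [hrk, hn]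
    have : (Finset.univ.filter (fun y => r y x)) ⊂ Finset.univ := by
      rw [Finset.ssubset_univ_iff]
      intro h
      have : x ∈ Finset.univ.filter (fun y => r y x) := by
        rw [h]; exact Finset.mem_univ x
      simp only [Finset.mem_filter, Finset.mem_univ, true_and] at this
      exact irrefl x this
    simpa using Finset.card_lt_card this
  -- the descent function
  set F : V → V := fun x => if h : ∃ μ, r μ x then (hdo x h).choose else x with hFdef
  have hFspec : ∀ x, 0 < rk x →
      r (F x) x ∧ G.Adj (F x) x ∧ ∀ η, (r η x ∨ η = x) → G.Adj x η → G.Adj (F x) η := by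
    intro x hx
    have h := hof x hx
    have : F x = (hdo x h).choose := by rw [hFdef]; simp [h]
    rw [this]
    exact (hdo x h).choose_spec
  have hF : ∀ x, 0 < rk x → rk (F x) < rk x := fun x hx => hmono _ _ (hFspec x hx).1
  have hdom : ∀ x, 0 < rk x → G.Adj (F x) x ∧
      ∀ η, rk η ≤ rk x → G.Adj x η → G.Adj (F x) η := by
    intro x hx
    refine ⟨(hFspec x hx).2.1, fun η hη hadj => (hFspec x hx).2.2 η (hle x η hη) hadj⟩
  -- shadow maps
  set ψ : ℕ → V → V := psi F rk hF with hψ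
  have hstep : ∀ (k : ℕ) (u u' : V), G.Adj u u' → G.Adj (ψ k u) (ψ (k + 1) u') :=
    fun k u u' h => psi_step hdom k u u' h
  have hψid : ∀ k x, n ≤ k → ψ k x = x := by
    intro k x hk
    exact psi_of_le (le_trans (le_of_lt (hrklt x)) hk)
  have hψ0 : ∀ x y, ψ 0 x = ψ 0 y := by
    intro x y
    apply hinj
    have h1 : rk (ψ 0 x) ≤ 0 := rk_psi_le 0 x
    have h2 : rk (ψ 0 y) ≤ 0 := rk_psi_le 0 y
    omega
  -- the strategy
  set c0 : V := ψ 0 (Classical.arbitrary V) with hc0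
  set S : V → V → V := fun c x =>
    if G.Adj c (ψ (Nat.findGreatest (fun j => G.Adj c (ψ j x)) n) x)
    then ψ (Nat.findGreatest (fun j => G.Adj c (ψ j x)) n) x else c with hS
  have hSlegal : ∀ c x, G.Adj c (S c x) := by
    intro c x
    rw [hS]
    by_cases h : G.Adj c (ψ (Nat.findGreatest (fun j => G.Adj c (ψ j x)) n) x)
    · simpa [h] using h
    · simp [h, G.refl]
  have hSgood : ∀ c x j, j ≤ n → G.Adj c (ψ j x) →
      ∃ j', j ≤ j' ∧ j' ≤ n ∧ S c x = ψ j' x := by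
    intro c x j hj hadj
    have hPf := Nat.findGreatest_spec (P := fun j => G.Adj c (ψ j x)) hj hadj
    refine ⟨Nat.findGreatest (fun j => G.Adj c (ψ j x)) n, Nat.le_findGreatest hj hadj,
      Nat.findGreatest_le n, ?_⟩
    rw [hS]
    exact if_pos hPf
  have hn1 : 1 ≤ n := Fintype.card_pos
  refine ⟨c0, S, hSlegal, ?_⟩
  intro rb hrb
  -- invariant
  have inv : ∀ m, (∃ m', copSeq S c0 rb (m' + 1) = rb m') ∨
      (∃ j, m + 1 ≤ j ∧ j ≤ n ∧ copSeq S c0 rb (m + 1) = ψ j (rb m)) := by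
    intro m
    induction m with
    | zero =>
      right
      have hc0' : c0 = ψ 0 (rb 0) := hψ0 _ _
      have hadj : G.Adj c0 (ψ 1 (rb 0)) := by
        rw [hc0']
        exact hstep 0 (rb 0) (rb 0) (G.refl _)
      obtain ⟨j', hj1, hj2, hj3⟩ := hSgood c0 (rb 0) 1 hn1 hadj
      exact ⟨j', hj1, hj2, hj3⟩
    | succ m ih =>
      rcases ih with h | ⟨j, hj1, hj2, hj3⟩
      · exact Or.inl h
      · by_cases hjn : j = n
        · left
          exact ⟨m, by rw [hj3, hjn, hψid n (rb m) le_rfl]⟩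
        · right
          have hjlt : j + 1 ≤ n := by omega
          have hadj : G.Adj (copSeq S c0 rb (m + 1)) (ψ (j + 1) (rb (m + 1))) := by
            rw [hj3]
            exact hstep j (rb m) (rb (m + 1)) (hrb m)
          obtain ⟨j', hj1', hj2', hj3'⟩ :=
            hSgood (copSeq S c0 rb (m + 1)) (rb (m + 1)) (j + 1) hjlt hadj
          refine ⟨j', by omega, hj2', ?_⟩
          show S (copSeq S c0 rb (m + 1)) (rb (m + 1)) = ψ j' (rb (m + 1))
          exact hj3'
  rcases inv (n - 1) with ⟨m', h⟩ | ⟨j, hj1, hj2, hj3⟩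
  · exact ⟨m', Or.inr h⟩
  · refine ⟨n - 1, Or.inr ?_⟩
    rw [hj3, hψid j _ (by omega)]


open Classical in
theorem copWin_constructible {V : Type*} [Fintype V] [Nonempty V] (G : RefGraph V)
    (h : CopWin G) : Constructible G := by
  classical
  obtain ⟨K, π, ρ, hKA, hNC, hπK, hπfix, hπhom, hinj, hdom⟩ :=
    exists_dismantle G (Fintype.card V) Finset.univ (le_of_eq Finset.card_univ)
  have hπK' : ∀ x, π x ∈ K := fun x => hπK x (Finset.mem_univ x)
  have hKne : K.Nonempty := ⟨π (Classical.arbitrary V), hπK' _⟩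
  by_cases h2 : 2 ≤ K.card
  · exact absurd h (robber_wins G K π hNC hπK' hπfix
      (fun x y hxy => hπhom x y (Finset.mem_univ x) (Finset.mem_univ y) hxy) h2)
  · have h1 : K.card = 1 := by
      have := Finset.card_pos.mpr hKne
      omega
    have hKsing : ∀ x y, x ∈ K → y ∈ K → x = y := by
      obtain ⟨v, hv⟩ := Finset.card_eq_one.mp h1
      intro x y hx hy
      rw [hv, Finset.mem_singleton] at hx hy
      rw [hx, hy]
    have hinj' : ∀ x y : V, ρ x = ρ y → x = y := by
      intro x y hxy
      rcases hinj x y (Finset.mem_univ x) (Finset.mem_univ y) hxy with h | ⟨ha, hb⟩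
      · exact h
      · exact hKsing _ _ ha hb
    refine ⟨fun a b => ρ a < ρ b, ?_, ?_⟩
    · haveI htri : IsTrichotomous V (fun a b => ρ a < ρ b) := by
        constructor
        intro a b ha hb
        exact hinj' a b (by omega)
      haveI htrans : IsTrans V (fun a b => ρ a < ρ b) := ⟨fun _ _ _ => Nat.lt_trans⟩
      haveI hwf : IsWellFounded V (fun a b => ρ a < ρ b) := ⟨(measure ρ).wf⟩
      exact ⟨⟩
    · rintro ν ⟨μ, hμ⟩
      obtain ⟨μ2, _, hlt, hadj, hd⟩ :=
        hdom ν (Finset.mem_univ ν) ⟨μ, Finset.mem_univ μ, hμ⟩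
      refine ⟨μ2, hlt, hadj, ?_⟩
      intro η hcase hadj2
      refine hd η (Finset.mem_univ η) ?_ hadj2
      rcases hcase with h | h
      · exact Nat.le_of_lt h
      · rw [h]

/-- a finite reflexive graph is cop-win if and only if it is constructible. -/
theorem copWin_iff_constructible {V : Type*} [Fintype V] [Nonempty V] (G : RefGraph V) :
    CopWin G ↔ Constructible G :=
  ⟨fun h => copWin_constructible G h, fun h => constructible_copWin G h⟩
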